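/- Let K ≥ 2 be even, let m ≥ 1 be an integer, set N = mK, and let α ∈ [0,2]. Then every pure strategy s of the Colonel Blotto game B_α(N,K) satisfying s_k ≤ 2N/K for every battlefield k is used with positive probability in some symmetric equilibrium strategy; that is, there exists a symmetric equilibrium strategy σ with σ(s) > 0. -/

import Mathlib

open Finset

/-- The set of pure strategies: allocations of `N` units of the resource
over `K` battlefields. -/
def pureStrats (K N : ℕ) : Finset (Fin K → ℕ) := Finset.Nat.antidiagonalTuple K N

/-- Payoff in the Colonel Blotto game `B_α(N,K)` of playing `s` against `t`:
`π(s,t) = Σ_k [1_{s_k > t_k} + (α/2)·1_{s_k = t_k}]`. -/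
noncomputable def payoff (α : ℝ) {K : ℕ} (s t : Fin K → ℕ) : ℝ :=
  ∑ k, ((if t k < s k then (1 : ℝ) else 0) + α / 2 * (if s k = t k then 1 else 0))

/-- `σ` is a mixed strategy: a probability distribution on the pure strategies. -/
def IsMixed (K N : ℕ) (σ : (Fin K → ℕ) → ℝ) : Prop :=
  (∀ s, 0 ≤ σ s) ∧ (∀ s, s ∉ pureStrats K N → σ s = 0) ∧
    ∑ s ∈ pureStrats K N, σ s = 1

/-- Expected payoff of the mixed strategy `σ` against the mixed strategy `τ`. -/
noncomputable def expPayoff (α : ℝ) (K N : ℕ) (σ τ : (Fin K → ℕ) → ℝ) : ℝ :=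
  ∑ s ∈ pureStrats K N, ∑ t ∈ pureStrats K N, σ s * τ t * payoff α s t

/-- `(σA, σB)` is a mixed-strategy Nash equilibrium: both are mixed strategies and
neither player can strictly improve by a unilateral deviation. -/
def IsNashEq (α : ℝ) (K N : ℕ) (σA σB : (Fin K → ℕ) → ℝ) : Prop :=
  IsMixed K N σA ∧ IsMixed K N σB ∧
    (∀ σ', IsMixed K N σ' → expPayoff α K N σ' σB ≤ expPayoff α K N σA σB) ∧
    (∀ τ', IsMixed K N τ' → expPayoff α K N τ' σA ≤ expPayoff α K N σB σA)

/-- The marginal distribution of `σ` at battlefield `k`, evaluated at `x`. -/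
noncomputable def marginal (K N : ℕ) (σ : (Fin K → ℕ) → ℝ) (k : Fin K) (x : ℕ) : ℝ :=
  ∑ s ∈ (pureStrats K N).filter (fun s => s k = x), σ s

/-- `σ` induces uniform marginals on `{0,1,…,2m}` at every battlefield. -/
def UniformMarginals (K N m : ℕ) (σ : (Fin K → ℕ) → ℝ) : Prop :=
  ∀ k x, marginal K N σ k x = if x ≤ 2 * m then (1 : ℝ) / (2 * m + 1) else 0


/-- The tail of our column lists: all values in `{0,…,2m}` except `a` and `c`. -/
def bRest (m a c : ℕ) : List ℕ :=
  (List.range (2*m+1)).filter (fun x => x ≠ a ∧ x ≠ c)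

lemma mem_bRest {m a c x : ℕ} :
    x ∈ bRest m a c ↔ x < 2*m+1 ∧ x ≠ a ∧ x ≠ c := by
  simp [bRest, List.mem_filter]

lemma perm_key {m a c : ℕ} (ha : a < 2*m+1) (hc : c < 2*m+1) (hac : a ≠ c) :
    (a :: c :: bRest m a c).Perm (List.range (2*m+1)) := by
  apply List.perm_of_nodup_nodup_toFinset_eq
  · refine List.Nodup.cons ?_ (List.Nodup.cons ?_ ?_)
    · simp [mem_bRest, hac]
    · simp [mem_bRest]
    · exact List.Nodup.filter _ List.nodup_range
  · exact List.nodup_range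
  · ext x
    simp only [List.toFinset_cons, Finset.mem_insert, List.mem_toFinset, mem_bRest,
      List.mem_range]
    omega

lemma perm_map_compl {m : ℕ} {L : List ℕ} (hL : L.Perm (List.range (2*m+1))) :
    (L.map (fun x => 2*m - x)).Perm (List.range (2*m+1)) := by
  have hmem : ∀ x, x ∈ L ↔ x < 2*m+1 := by
    intro x; rw [hL.mem_iff, List.mem_range]
  apply List.perm_of_nodup_nodup_toFinset_eq
  · apply List.Nodup.map_on
    · intro x hx y hy hxy
      have hx' := (hmem x).1 hx
      have hy' := (hmem y).1 hy
      omega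
    · exact hL.nodup_iff.2 List.nodup_range
  · exact List.nodup_range
  · ext x
    simp only [List.mem_toFinset, List.mem_map, List.mem_range, hmem]
    constructor
    · rintro ⟨y, hy, rfl⟩; omega
    · intro hx; exact ⟨2*m - x, by omega, by omega⟩

/-- Second entry of the first column of a pair. -/
def cV (m a b : ℕ) : ℕ := if a + b = 2*m then (a+1) % (2*m+1) else 2*m - b

lemma cV_lt {m a b : ℕ} : cV m a b < 2*m+1 := by
  unfold cV; split
  · exact Nat.mod_lt _ (by omega)
  · omega

lemma cV_ne {m a b : ℕ} (hm : 1 ≤ m) (ha : a ≤ 2*m) (hb : b ≤ 2*m) : cV m a b ≠ a := by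
  unfold cV; split
  · rcases Nat.lt_or_ge (a+1) (2*m+1) with h | h
    · rw [Nat.mod_eq_of_lt h]; omega
    · have : a = 2*m := by omega
      subst this
      rw [show 2*m+1 = (2*m+1) * 1 by ring, Nat.mod_self]
      omega
  · omega

/-- First column of a pair (used on even battlefields). -/
def colA (m a b : ℕ) : List ℕ := a :: cV m a b :: bRest m a (cV m a b)

/-- Pre-image list for the second column. -/
def colApre (m a b : ℕ) : List ℕ :=
  if a + b = 2*m then colA m a b else cV m a b :: a :: bRest m a (cV m a b)

/-- Second column of a pair (used on odd battlefields). -/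
def colB (m a b : ℕ) : List ℕ := (colApre m a b).map (fun x => 2*m - x)

lemma colA_perm {m a b : ℕ} (hm : 1 ≤ m) (ha : a ≤ 2*m) (hb : b ≤ 2*m) :
    (colA m a b).Perm (List.range (2*m+1)) :=
  perm_key (by omega) cV_lt (Ne.symm (cV_ne hm ha hb))

lemma colApre_perm {m a b : ℕ} (hm : 1 ≤ m) (ha : a ≤ 2*m) (hb : b ≤ 2*m) :
    (colApre m a b).Perm (List.range (2*m+1)) := by
  unfold colApre; split
  · exact colA_perm hm ha hb
  · exact (List.Perm.swap _ _ _).trans (colA_perm hm ha hb)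

lemma colB_perm {m a b : ℕ} (hm : 1 ≤ m) (ha : a ≤ 2*m) (hb : b ≤ 2*m) :
    (colB m a b).Perm (List.range (2*m+1)) :=
  perm_map_compl (colApre_perm hm ha hb)

lemma getD_map_compl {m : ℕ} (L : List ℕ) (j : ℕ) (h : j < L.length) :
    (L.map (fun x => 2*m - x)).getD j 0 = 2*m - L.getD j 0 := by
  rw [List.getD_eq_getElem _ _ (by simpa using h), List.getD_eq_getElem _ _ h,
    List.getElem_map]

lemma colA_getD_zero {m a b : ℕ} : (colA m a b).getD 0 0 = a := rfl

lemma colB_getD_zero {m a b : ℕ} (ha : a ≤ 2*m) (hb : b ≤ 2*m) :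
    (colB m a b).getD 0 0 = b := by
  unfold colB colApre
  split_ifs with h
  · rw [getD_map_compl _ _ (by simp [colA])]
    simp only [colA, List.getD_cons_zero]
    omega
  · rw [getD_map_compl _ _ (by simp)]
    simp only [List.getD_cons_zero, cV, if_neg h]
    omega

lemma bRest_getD_le {m a c j : ℕ} (h : j < (bRest m a c).length) :
    (bRest m a c).getD j 0 ≤ 2*m := by
  rw [List.getD_eq_getElem _ _ h]
  have := List.getElem_mem (l := bRest m a c) (n := j) h
  exact Nat.lt_succ_iff.mp (mem_bRest.mp this).1

lemma col_rowsum {m a b : ℕ} (hm : 1 ≤ m) (ha : a ≤ 2*m) (hb : b ≤ 2*m)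
    {j : ℕ} (hj : j < 2*m+1) :
    (colA m a b).getD j 0 + (colB m a b).getD j 0
      = if j = 0 then a + b else if j = 1 then 4*m - (a+b) else 2*m := by
  have hblen : (bRest m a (cV m a b)).length = 2*m - 1 := by
    have := (colA_perm hm ha hb).length_eq
    simp only [colA, List.length_cons, List.length_range] at this
    omega
  have hcv : cV m a b ≤ 2*m := Nat.lt_succ_iff.mp cV_lt
  by_cases h : a + b = 2*m
  · have hpre : colApre m a b = a :: cV m a b :: bRest m a (cV m a b) := by
      simp [colApre, colA, h]
    match j with
    | 0 =>
      rw [colA_getD_zero, colB_getD_zero ha hb]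
      simp
    | 1 =>
      simp only [colB, hpre, colA, List.getD_cons_succ, List.getD_cons_zero]
      rw [getD_map_compl _ _ (by simp)]
      simp only [List.getD_cons_succ, List.getD_cons_zero]
      norm_num
      omega
    | (j+2) =>
      have hj2 : j < (bRest m a (cV m a b)).length := by omega
      have hle := bRest_getD_le hj2
      simp only [colB, hpre, colA, List.getD_cons_succ]
      rw [getD_map_compl _ _ (by simp; omega)]
      simp only [List.getD_cons_succ]
      have hjj : (bRest m a (cV m a b))[j]?.getD 0 = (bRest m a (cV m a b)).getD j 0 := List.getD_eq_getElem?_getD.symm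
      rw [if_neg (show j+2 ≠ 0 by omega), if_neg (show j+2 ≠ 1 by omega)]
      omega
  · have hpre : colApre m a b = cV m a b :: a :: bRest m a (cV m a b) := by
      simp [colApre, h]
    have hcvv : cV m a b = 2*m - b := by simp [cV, h]
    match j with
    | 0 =>
      rw [colA_getD_zero, colB_getD_zero ha hb]
      simp
    | 1 =>
      simp only [colB, hpre, colA, List.getD_cons_succ, List.getD_cons_zero]
      rw [getD_map_compl _ _ (by simp)]
      simp only [List.getD_cons_succ, List.getD_cons_zero]
      norm_num
      omega
    | (j+2) =>
      have hj2 : j < (bRest m a (cV m a b)).length := by omega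
      have hle := bRest_getD_le hj2
      simp only [colB, hpre, colA, List.getD_cons_succ]
      rw [getD_map_compl _ _ (by simp; omega)]
      simp only [List.getD_cons_succ]
      have hjj : (bRest m a (cV m a b))[j]?.getD 0 = (bRest m a (cV m a b)).getD j 0 := List.getD_eq_getElem?_getD.symm
      rw [if_neg (show j+2 ≠ 0 by omega), if_neg (show j+2 ≠ 1 by omega)]
      omega

lemma sum_getD_perm {n : ℕ} {L : List ℕ} (hL : L.Perm (List.range n)) (F : ℕ → ℝ) :
    ∑ j ∈ Finset.range n, F (L.getD j 0) = ∑ x ∈ Finset.range n, F x := by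
  have hlen : L.length = n := by simpa using hL.length_eq
  subst hlen
  have h1 : ∑ j ∈ Finset.range L.length, F (L.getD j 0) = (L.map F).sum := by
    rw [← Fin.sum_univ_eq_sum_range]
    conv_rhs => rw [← List.ofFn_get L]
    rw [List.map_ofFn, List.sum_ofFn]
    apply Finset.sum_congr rfl
    intro j _
    simp [List.getD_eq_getElem _ _ j.isLt, Function.comp]
  rw [h1, (hL.map F).sum_eq]
  rw [← List.sum_toFinset _ List.nodup_range]
  congr 1
  ext x
  simp

lemma sum_range_double (r : ℕ) (f : ℕ → ℕ) :
    ∑ i ∈ Finset.range (2*r), f i = ∑ i ∈ Finset.range r, (f (2*i) + f (2*i+1)) := by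
  induction r with
  | zero => simp
  | succ r ih =>
    rw [show 2*(r+1) = 2*r+1+1 by ring, Finset.sum_range_succ, Finset.sum_range_succ,
      Finset.sum_range_succ, ih]
    omega

/-- `s` extended to a function on `ℕ`. -/
def sAB (K : ℕ) (s : Fin K → ℕ) (k : ℕ) : ℕ := if h : k < K then s ⟨k, h⟩ else 0

/-- The column of the support matrix at battlefield `k`. -/
def colFor (m K : ℕ) (s : Fin K → ℕ) (k : ℕ) : List ℕ :=
  if k % 2 = 0 then colA m (sAB K s (2*(k/2))) (sAB K s (2*(k/2)+1))
  else colB m (sAB K s (2*(k/2))) (sAB K s (2*(k/2)+1))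

/-- Row `j` of the support matrix, a pure strategy. -/
def vRow (m K : ℕ) (s : Fin K → ℕ) (j : ℕ) : Fin K → ℕ :=
  fun k => (colFor m K s k.val).getD j 0

/-- The symmetric equilibrium strategy containing `s` in its support. -/
noncomputable def blotSigma (m K : ℕ) (s : Fin K → ℕ) : (Fin K → ℕ) → ℝ :=
  fun t => (∑ j ∈ Finset.range (2*m+1), if vRow m K s j = t then (1:ℝ) else 0) / (2*m+1)

section BlottoAux

variable {K m N : ℕ} {s : Fin K → ℕ}

lemma sAB_le (hsle : ∀ k, s k ≤ 2*m) (k : ℕ) : sAB K s k ≤ 2*m := by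
  unfold sAB; split
  · exact hsle _
  · omega

lemma colFor_perm (hm : 1 ≤ m) (hsle : ∀ k, s k ≤ 2*m) (k : ℕ) :
    (colFor m K s k).Perm (List.range (2*m+1)) := by
  unfold colFor; split
  · exact colA_perm hm (sAB_le hsle _) (sAB_le hsle _)
  · exact colB_perm hm (sAB_le hsle _) (sAB_le hsle _)

lemma vRow_le (hm : 1 ≤ m) (hsle : ∀ k, s k ≤ 2*m) {j : ℕ} (hj : j < 2*m+1)
    (k : Fin K) : vRow m K s j k ≤ 2*m := by
  have hp := colFor_perm (s := s) hm hsle k.val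
  have hlen : (colFor m K s k.val).length = 2*m+1 := by simpa using hp.length_eq
  unfold vRow
  rw [List.getD_eq_getElem _ _ (by omega)]
  have := List.getElem_mem (l := colFor m K s k.val) (n := j) (by omega)
  have := hp.mem_iff.mp this
  rw [List.mem_range] at this
  omega

lemma vRow_zero (hm : 1 ≤ m) (hsle : ∀ k, s k ≤ 2*m) : vRow m K s 0 = s := by
  funext k
  have hk := k.isLt
  unfold vRow colFor
  rcases Nat.even_or_odd k.val with he | ho
  · have h2 : k.val % 2 = 0 := Nat.even_iff.mp he
    rw [if_pos h2, colA_getD_zero]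
    have : 2*(k.val/2) = k.val := by omega
    rw [this]
    simp [sAB, hk]
  · have h2 : ¬ (k.val % 2 = 0) := by
      have := Nat.odd_iff.mp ho; omega
    rw [if_neg h2, colB_getD_zero (sAB_le hsle _) (sAB_le hsle _)]
    have : 2*(k.val/2)+1 = k.val := by
      have := Nat.odd_iff.mp ho; omega
    rw [this]
    simp [sAB, hk]

lemma vRow_rowsum (hm : 1 ≤ m) (hKK : 2*(K/2) = K) (hN : N = m*K)
    (hsle : ∀ k, s k ≤ 2*m) (hssum : ∑ k, s k = N)
    {j : ℕ} (hj : j < 2*m+1) : ∑ k, vRow m K s j k = N := by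
  have hsum' : ∑ k ∈ Finset.range K, sAB K s k = N := by
    rw [← hssum, Finset.sum_range fun k => sAB K s k]
    · apply Finset.sum_congr rfl
      intro k _
      simp [sAB, k.isLt]
  have hform : ∀ i : ℕ,
      colFor m K s (2*i) = colA m (sAB K s (2*i)) (sAB K s (2*i+1)) ∧
      colFor m K s (2*i+1) = colB m (sAB K s (2*i)) (sAB K s (2*i+1)) := by
    intro i
    constructor
    · unfold colFor
      rw [if_pos (by omega)]
      congr 2 <;> omega
    · unfold colFor
      rw [if_neg (by omega)]
      congr 2 <;> omega
  have hpair : ∀ i : ℕ, (colFor m K s (2*i)).getD j 0 + (colFor m K s (2*i+1)).getD j 0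
      = if j = 0 then sAB K s (2*i) + sAB K s (2*i+1)
        else if j = 1 then 4*m - (sAB K s (2*i) + sAB K s (2*i+1)) else 2*m := by
    intro i
    rw [(hform i).1, (hform i).2]
    exact col_rowsum hm (sAB_le hsle _) (sAB_le hsle _) hj
  have hstep : ∑ k, vRow m K s j k = ∑ k ∈ Finset.range K, (colFor m K s k).getD j 0 := by
    rw [Finset.sum_range fun k => (colFor m K s k).getD j 0]
    rfl
  have hdouble := sum_range_double (K/2) (fun k => (colFor m K s k).getD j 0)
  rw [hKK] at hdouble
  rw [hstep, hdouble]
  have hC : ∑ i ∈ Finset.range (K/2), (sAB K s (2*i) + sAB K s (2*i+1)) = N := by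
    rw [← sum_range_double, hKK, hsum']
  rcases Nat.eq_zero_or_pos j with rfl | hj0
  · simp only [hpair, if_pos rfl]
    exact hC
  rcases Nat.eq_or_lt_of_le hj0 with hj1 | hj2
  · simp only [hpair, if_neg (by omega : ¬ j = 0), if_pos hj1.symm]
    have hle4 : ∀ i ∈ Finset.range (K/2), sAB K s (2*i) + sAB K s (2*i+1) ≤ 4*m := by
      intro i _
      have := sAB_le (s := s) hsle (2*i)
      have := sAB_le (s := s) hsle (2*i+1)
      omega
    have h1 : ∑ i ∈ Finset.range (K/2),
        ((4*m - (sAB K s (2*i) + sAB K s (2*i+1))) + (sAB K s (2*i) + sAB K s (2*i+1)))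
        = ∑ _i ∈ Finset.range (K/2), 4*m := by
      apply Finset.sum_congr rfl
      intro i hi
      exact Nat.sub_add_cancel (hle4 i hi)
    rw [Finset.sum_add_distrib, hC] at h1
    rw [Finset.sum_const, Finset.card_range, smul_eq_mul] at h1
    have h2 : K/2*(4*m) = 2*N := by
      calc K/2*(4*m) = (2*(K/2))*(2*m) := by ring
        _ = K*(2*m) := by rw [hKK]
        _ = 2*N := by rw [hN]; ring
    omega
  · simp only [hpair, if_neg (by omega : ¬ j = 0), if_neg (by omega : ¬ j = 1)]
    rw [Finset.sum_const, Finset.card_range, smul_eq_mul]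
    calc K/2*(2*m) = (2*(K/2))*m := by ring
      _ = K*m := by rw [hKK]
      _ = N := by rw [hN]; ring

lemma vRow_mem (hm : 1 ≤ m) (hKK : 2*(K/2) = K) (hN : N = m*K)
    (hsle : ∀ k, s k ≤ 2*m) (hssum : ∑ k, s k = N)
    {j : ℕ} (hj : j < 2*m+1) : vRow m K s j ∈ pureStrats K N :=
  Finset.Nat.mem_antidiagonalTuple.mpr (vRow_rowsum hm hKK hN hsle hssum hj)

end BlottoAux

lemma eval_col (α : ℝ) (n y : ℕ) :
    ∑ x ∈ Finset.range n, ((if x < y then (1:ℝ) else 0) + α/2 * (if y = x then 1 else 0))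
      = ((min y n : ℕ) : ℝ) + α/2 * (if y < n then 1 else 0) := by
  rw [Finset.sum_add_distrib]
  congr 1
  · rw [Finset.sum_boole]
    have h : (Finset.range n).filter (fun x => x < y) = Finset.range (min y n) := by
      ext z
      simp only [Finset.mem_filter, Finset.mem_range, lt_min_iff]
      omega
    rw [h, Finset.card_range]
  · rw [← Finset.mul_sum]
    congr 1
    rw [Finset.sum_ite_eq]
    simp

lemma payoff_rowsum {K m : ℕ} {s : Fin K → ℕ} (α : ℝ) (hm : 1 ≤ m)
    (hsle : ∀ k, s k ≤ 2*m) (t : Fin K → ℕ) :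
    ∑ j ∈ Finset.range (2*m+1), payoff α t (vRow m K s j)
      = ∑ k, (((min (t k) (2*m+1) : ℕ):ℝ) + α/2 * (if t k < 2*m+1 then 1 else 0)) := by
  unfold payoff vRow
  rw [Finset.sum_comm]
  apply Finset.sum_congr rfl
  intro k _
  exact (sum_getD_perm (colFor_perm hm hsle k.val)
    (fun x => (if x < t k then (1:ℝ) else 0) + α/2 * (if t k = x then 1 else 0))).trans
    (eval_col α (2*m+1) (t k))

theorem stmt4 (K m N : ℕ) (hK : 2 ≤ K) (hKeven : Even K) (hm : 1 ≤ m) (hN : N = m * K)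
    (α : ℝ) (hα : α ∈ Set.Icc (0 : ℝ) 2)
    (s : Fin K → ℕ) (hs : s ∈ pureStrats K N)
    (hbound : ∀ k, (s k : ℝ) ≤ 2 * (N : ℝ) / K) :
    ∃ σ, IsNashEq α K N σ σ ∧ 0 < σ s := by
  obtain ⟨hα0, hα2⟩ := hα
  obtain ⟨r, hr⟩ := hKeven
  have hKK : 2*(K/2) = K := by omega
  have hssum : ∑ k, s k = N := Finset.Nat.mem_antidiagonalTuple.mp hs
  have hsle : ∀ k, s k ≤ 2*m := by
    intro k
    have h := hbound k
    have hK0 : (K:ℝ) ≠ 0 := Nat.cast_ne_zero.mpr (by omega)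
    have h2 : 2 * (N:ℝ) / K = ((2*m : ℕ) : ℝ) := by
      rw [hN]; push_cast; field_simp
    rw [h2] at h
    exact_mod_cast h
  have hnR : (0:ℝ) < 2*(m:ℝ)+1 := by positivity
  set σ := blotSigma m K s with hσdef
  have hmem : ∀ {j : ℕ}, j < 2*m+1 → vRow m K s j ∈ pureStrats K N :=
    fun hj => vRow_mem hm hKK hN hsle hssum hj
  have hv0 : vRow m K s 0 = s := vRow_zero hm hsle
  have hvle : ∀ {j : ℕ}, j < 2*m+1 → ∀ k, vRow m K s j k ≤ 2*m :=
    fun hj k => vRow_le hm hsle hj k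
  -- σ is a mixed strategy
  have hσ0 : ∀ t, 0 ≤ σ t := by
    intro t
    apply div_nonneg _ (le_of_lt hnR)
    apply Finset.sum_nonneg
    intro j _
    split <;> norm_num
  have hσsupp : ∀ t, t ∉ pureStrats K N → σ t = 0 := by
    intro t ht
    have h : ∀ j ∈ Finset.range (2*m+1), (if vRow m K s j = t then (1:ℝ) else 0) = 0 := by
      intro j hj
      rw [if_neg]
      intro hEq
      exact ht (hEq ▸ hmem (Finset.mem_range.mp hj))
    rw [hσdef]
    unfold blotSigma
    rw [Finset.sum_eq_zero h, zero_div]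
  have hσtot : ∑ t ∈ pureStrats K N, σ t = 1 := by
    rw [hσdef]
    unfold blotSigma
    rw [← Finset.sum_div, Finset.sum_comm]
    have h : ∀ j ∈ Finset.range (2*m+1),
        ∑ t ∈ pureStrats K N, (if vRow m K s j = t then (1:ℝ) else 0) = 1 := by
      intro j hj
      rw [Finset.sum_ite_eq]
      exact if_pos (hmem (Finset.mem_range.mp hj))
    rw [Finset.sum_congr rfl h, Finset.sum_const, Finset.card_range, nsmul_eq_mul, mul_one]
    push_cast
    field_simp
  have hmixed : IsMixed K N σ := ⟨hσ0, hσsupp, hσtot⟩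
  -- expected payoff of a pure strategy against σ
  have hinner : ∀ t, ∑ u ∈ pureStrats K N, σ u * payoff α t u
      = (∑ j ∈ Finset.range (2*m+1), payoff α t (vRow m K s j)) / (2*(m:ℝ)+1) := by
    intro t
    rw [hσdef]
    unfold blotSigma
    simp only [div_mul_eq_mul_div]
    rw [← Finset.sum_div]
    congr 1
    calc ∑ u ∈ pureStrats K N,
          (∑ j ∈ Finset.range (2*m+1), if vRow m K s j = u then (1:ℝ) else 0) * payoff α t u
        = ∑ u ∈ pureStrats K N, ∑ j ∈ Finset.range (2*m+1),
            (if vRow m K s j = u then (1:ℝ) else 0) * payoff α t u := by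
          apply Finset.sum_congr rfl
          intros
          rw [Finset.sum_mul]
      _ = ∑ j ∈ Finset.range (2*m+1), ∑ u ∈ pureStrats K N,
            (if vRow m K s j = u then (1:ℝ) else 0) * payoff α t u := Finset.sum_comm
      _ = ∑ j ∈ Finset.range (2*m+1), payoff α t (vRow m K s j) := by
          apply Finset.sum_congr rfl
          intro j hj
          simp only [ite_mul, one_mul, zero_mul]
          rw [Finset.sum_ite_eq]
          exact if_pos (hmem (Finset.mem_range.mp hj))
  have hexp : ∀ τ, expPayoff α K N τ σ = ∑ t ∈ pureStrats K N,
      τ t * ((∑ j ∈ Finset.range (2*m+1), payoff α t (vRow m K s j)) / (2*(m:ℝ)+1)) := by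
    intro τ
    unfold expPayoff
    apply Finset.sum_congr rfl
    intro t _
    rw [← hinner t, Finset.mul_sum]
    apply Finset.sum_congr rfl
    intros
    ring
  -- the equilibrium value
  have hVle : ∀ t ∈ pureStrats K N,
      ∑ j ∈ Finset.range (2*m+1), payoff α t (vRow m K s j) ≤ (N:ℝ) + α/2 * K := by
    intro t ht
    rw [payoff_rowsum α hm hsle t]
    have htsum : ∑ k, t k = N := Finset.Nat.mem_antidiagonalTuple.mp ht
    calc ∑ k, (((min (t k) (2*m+1) : ℕ):ℝ) + α/2 * (if t k < 2*m+1 then 1 else 0))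
        ≤ ∑ k, ((t k : ℝ) + α/2 * 1) := by
          apply Finset.sum_le_sum
          intro k _
          apply add_le_add
          · exact_mod_cast Nat.cast_le.mpr (Nat.min_le_left _ _)
          · apply mul_le_mul_of_nonneg_left _ (by positivity)
            split <;> norm_num
      _ = (N:ℝ) + α/2 * K := by
          rw [Finset.sum_add_distrib, Finset.sum_const, Finset.card_univ, Fintype.card_fin,
            nsmul_eq_mul]
          rw [← Nat.cast_sum, htsum]
          ring
  have hVeq : ∀ {j : ℕ}, j < 2*m+1 →
      ∑ j' ∈ Finset.range (2*m+1), payoff α (vRow m K s j) (vRow m K s j')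
        = (N:ℝ) + α/2 * K := by
    intro j hj
    rw [payoff_rowsum α hm hsle _]
    have hsum : ∑ k, vRow m K s j k = N := vRow_rowsum hm hKK hN hsle hssum hj
    calc ∑ k, (((min (vRow m K s j k) (2*m+1) : ℕ):ℝ) + α/2 * (if vRow m K s j k < 2*m+1 then 1 else 0))
        = ∑ k, ((vRow m K s j k : ℝ) + α/2 * 1) := by
          apply Finset.sum_congr rfl
          intro k _
          have hk := hvle hj k
          rw [min_eq_left (by omega), if_pos (by omega)]
      _ = (N:ℝ) + α/2 * K := by
          rw [Finset.sum_add_distrib, Finset.sum_const, Finset.card_univ, Fintype.card_fin,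
            nsmul_eq_mul]
          rw [← Nat.cast_sum, hsum]
          ring
  set V : ℝ := ((N:ℝ) + α/2 * K) / (2*(m:ℝ)+1) with hVdef
  have hub : ∀ τ, IsMixed K N τ → expPayoff α K N τ σ ≤ V := by
    intro τ hτ
    rw [hexp τ]
    calc ∑ t ∈ pureStrats K N,
          τ t * ((∑ j ∈ Finset.range (2*m+1), payoff α t (vRow m K s j)) / (2*(m:ℝ)+1))
        ≤ ∑ t ∈ pureStrats K N, τ t * V := by
          apply Finset.sum_le_sum
          intro t ht
          apply mul_le_mul_of_nonneg_left _ (hτ.1 t)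
          rw [hVdef]
          exact (div_le_div_iff_of_pos_right hnR).mpr (hVle t ht)
      _ = V := by rw [← Finset.sum_mul, hτ.2.2, one_mul]
  have heq : expPayoff α K N σ σ = V := by
    rw [hexp σ]
    have h : ∀ t ∈ pureStrats K N,
        σ t * ((∑ j ∈ Finset.range (2*m+1), payoff α t (vRow m K s j)) / (2*(m:ℝ)+1))
          = σ t * V := by
      intro t ht
      rcases eq_or_ne (σ t) 0 with h0 | h0
      · rw [h0, zero_mul, zero_mul]
      · obtain ⟨j, hj, hvj⟩ : ∃ j ∈ Finset.range (2*m+1), vRow m K s j = t := by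
          by_contra hcon
          push_neg at hcon
          apply h0
          rw [hσdef]
          unfold blotSigma
          rw [Finset.sum_eq_zero, zero_div]
          intro j hj
          rw [if_neg (hcon j hj)]
        rw [← hvj, hVeq (Finset.mem_range.mp hj), hVdef]
    rw [Finset.sum_congr rfl h, ← Finset.sum_mul, hσtot, one_mul]
  refine ⟨σ, ⟨hmixed, hmixed, fun σ' h => (hub σ' h).trans heq.ge,
    fun τ' h => (hub τ' h).trans heq.ge⟩, ?_⟩
  have hone : (1:ℝ) ≤ ∑ j ∈ Finset.range (2*m+1), (if vRow m K s j = s then (1:ℝ) else 0) := by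
    have h0n : 0 ∈ Finset.range (2*m+1) := Finset.mem_range.mpr (by omega)
    calc (1:ℝ) = if vRow m K s 0 = s then (1:ℝ) else 0 := by rw [if_pos hv0]
      _ ≤ _ := Finset.single_le_sum
          (f := fun j => if vRow m K s j = s then (1:ℝ) else 0)
          (fun j _ => by split <;> norm_num) h0n
  rw [hσdef]
  unfold blotSigma
  exact div_pos (lt_of_lt_of_le one_pos hone) hnR
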